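/- Let d ≥ 1 and let φ : ℝ^d → ℝ be Lipschitz (with some constant K ≥ 0). For t > 0 set ψ_t(y) = ‖y‖²/2 + t·φ(y), ψ_t*(x) = sup_y (⟨x,y⟩ − ψ_t(y)), ψ_t**(y) = sup_x (⟨x,y⟩ − ψ_t*(x)), Θ_t = {y : ψ_t**(y) = ψ_t(y)}, and Σ_t = {y : ψ_t** is strictly convex at y}. Then: (i) Σ_t ⊆ Θ_t for every t > 0; (ii) Θ_t ⊆ Θ_s whenever 0 < s ≤ t; (iii) Σ_t ⊆ Σ_s whenever 0 < s ≤ t. -/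
import Mathlib


open scoped RealInnerProductSpace
noncomputable section

/-- Legendre transform: `f*(x) = sup_y (⟨x,y⟩ − f(y))`. -/
def conj {d : ℕ} (f : EuclideanSpace ℝ (Fin d) → ℝ)
    (x : EuclideanSpace ℝ (Fin d)) : ℝ :=
  ⨆ y : EuclideanSpace ℝ (Fin d), (⟪x, y⟫ - f y)

/-- `ψ_t(y) = ‖y‖²/2 + t φ(y)`. -/
def psiFun {d : ℕ} (φ : EuclideanSpace ℝ (Fin d) → ℝ) (t : ℝ)
    (y : EuclideanSpace ℝ (Fin d)) : ℝ :=
  ‖y‖ ^ 2 / 2 + t * φ y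

/-- The touching set `Θ_t = {y : ψ_t**(y) = ψ_t(y)}`. -/
def thetaSet {d : ℕ} (φ : EuclideanSpace ℝ (Fin d) → ℝ) (t : ℝ) :
    Set (EuclideanSpace ℝ (Fin d)) :=
  {y | conj (conj (psiFun φ t)) y = psiFun φ t y}

/-- `g` is strictly convex at `y`: some subgradient `x ∈ ∂g(y)` is such that
`z ↦ g(z) − ⟨x,z⟩` has a strict global minimum at `y`. -/
def StrictlyConvexAt {d : ℕ} (g : EuclideanSpace ℝ (Fin d) → ℝ)
    (y : EuclideanSpace ℝ (Fin d)) : Prop :=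
  ∃ x : EuclideanSpace ℝ (Fin d),
    (∀ z, g z ≥ g y + ⟪x, z - y⟫) ∧
    (∀ z, z ≠ y → g y - ⟪x, y⟫ < g z - ⟪x, z⟫)

/-- `Σ_t = {y : ψ_t** is strictly convex at y}`. -/
def sigmaSet {d : ℕ} (φ : EuclideanSpace ℝ (Fin d) → ℝ) (t : ℝ) :
    Set (EuclideanSpace ℝ (Fin d)) :=
  {y | StrictlyConvexAt (conj (conj (psiFun φ t))) y}

section Helpers

variable {d : ℕ} {φ : EuclideanSpace ℝ (Fin d) → ℝ} {K : ℝ}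

lemma term_bound2 (hK : 0 ≤ K) (hLip : ∀ y z, |φ y - φ z| ≤ K * ‖y - z‖)
    {t : ℝ} (ht : 0 ≤ t) (x y : EuclideanSpace ℝ (Fin d)) :
    ⟪x, y⟫ - psiFun φ t y ≤ (‖x‖ + t * K) * ‖y‖ - ‖y‖ ^ 2 / 2 + t * |φ 0| := by
  have h1 : ⟪x, y⟫ ≤ ‖x‖ * ‖y‖ := real_inner_le_norm x y
  have h2 : φ 0 - φ y ≤ K * ‖y‖ := by
    have h := hLip 0 y
    have : ‖(0 : EuclideanSpace ℝ (Fin d)) - y‖ = ‖y‖ := by simp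
    rw [this] at h
    exact (le_abs_self _).trans h
  have h3 : t * (φ 0 - φ y) ≤ t * (K * ‖y‖) := mul_le_mul_of_nonneg_left h2 ht
  have h4 : -(t * |φ 0|) ≤ t * φ 0 := by
    have := mul_le_mul_of_nonneg_left (neg_abs_le (φ 0)) ht
    linarith [this]
  unfold psiFun
  nlinarith [h1, h3, h4]

lemma term_bound (hK : 0 ≤ K) (hLip : ∀ y z, |φ y - φ z| ≤ K * ‖y - z‖)
    {t : ℝ} (ht : 0 ≤ t) (x y : EuclideanSpace ℝ (Fin d)) :
    ⟪x, y⟫ - psiFun φ t y ≤ (‖x‖ + t * K) ^ 2 / 2 + t * |φ 0| := by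
  have := term_bound2 hK hLip ht x y
  nlinarith [sq_nonneg (‖x‖ + t * K - ‖y‖)]

lemma bddAbove_conjSet (hK : 0 ≤ K) (hLip : ∀ y z, |φ y - φ z| ≤ K * ‖y - z‖)
    {t : ℝ} (ht : 0 ≤ t) (x : EuclideanSpace ℝ (Fin d)) :
    BddAbove (Set.range fun y => ⟪x, y⟫ - psiFun φ t y) := by
  refine ⟨(‖x‖ + t * K) ^ 2 / 2 + t * |φ 0|, ?_⟩
  rintro a ⟨y, rfl⟩
  exact term_bound hK hLip ht x y

lemma conj_ge (hK : 0 ≤ K) (hLip : ∀ y z, |φ y - φ z| ≤ K * ‖y - z‖)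
    {t : ℝ} (ht : 0 ≤ t) (x y : EuclideanSpace ℝ (Fin d)) :
    ⟪x, y⟫ - psiFun φ t y ≤ conj (psiFun φ t) x :=
  le_ciSup (bddAbove_conjSet hK hLip ht x) y

lemma biconj_term_le (hK : 0 ≤ K) (hLip : ∀ y z, |φ y - φ z| ≤ K * ‖y - z‖)
    {t : ℝ} (ht : 0 ≤ t) (y x : EuclideanSpace ℝ (Fin d)) :
    ⟪y, x⟫ - conj (psiFun φ t) x ≤ psiFun φ t y := by
  have := conj_ge hK hLip ht x y
  rw [real_inner_comm]
  linarith

lemma biconj_le (hK : 0 ≤ K) (hLip : ∀ y z, |φ y - φ z| ≤ K * ‖y - z‖)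
    {t : ℝ} (ht : 0 ≤ t) (y : EuclideanSpace ℝ (Fin d)) :
    conj (conj (psiFun φ t)) y ≤ psiFun φ t y := by
  show (⨆ x, ⟪y, x⟫ - conj (psiFun φ t) x) ≤ _
  exact ciSup_le (biconj_term_le hK hLip ht y)

lemma biconj_ge (hK : 0 ≤ K) (hLip : ∀ y z, |φ y - φ z| ≤ K * ‖y - z‖)
    {t : ℝ} (ht : 0 ≤ t) (y x : EuclideanSpace ℝ (Fin d)) :
    ⟪y, x⟫ - conj (psiFun φ t) x ≤ conj (conj (psiFun φ t)) y := by
  have hb : BddAbove (Set.range fun x => ⟪y, x⟫ - conj (psiFun φ t) x) := by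
    refine ⟨psiFun φ t y, ?_⟩
    rintro a ⟨x, rfl⟩
    exact biconj_term_le hK hLip ht y x
  exact le_ciSup hb x

lemma psi_decomp {s t : ℝ} (ht : t ≠ 0) (y : EuclideanSpace ℝ (Fin d)) :
    psiFun φ s y = (1 - s / t) * (‖y‖ ^ 2 / 2) + (s / t) * psiFun φ t y := by
  unfold psiFun
  field_simp
  ring

lemma key_ineq (hK : 0 ≤ K) (hLip : ∀ y z, |φ y - φ z| ≤ K * ‖y - z‖)
    {s t : ℝ} (hs : 0 < s) (hst : s ≤ t) (y : EuclideanSpace ℝ (Fin d)) :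
    (1 - s / t) * (‖y‖ ^ 2 / 2) + (s / t) * conj (conj (psiFun φ t)) y
      ≤ conj (conj (psiFun φ s)) y := by
  have ht : 0 < t := hs.trans_le hst
  set l := s / t with hl
  have hl0 : 0 < l := div_pos hs ht
  have hl1 : l ≤ 1 := (div_le_one ht).2 hst
  have step1 : ∀ x : EuclideanSpace ℝ (Fin d),
      conj (psiFun φ s) ((1 - l) • y + l • x)
        ≤ (1 - l) * (‖y‖ ^ 2 / 2) + l * conj (psiFun φ t) x := by
    intro x
    show (⨆ z, ⟪(1 - l) • y + l • x, z⟫ - psiFun φ s z) ≤ _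
    apply ciSup_le
    intro z
    have hqz : ⟪y, z⟫ - ‖z‖ ^ 2 / 2 ≤ ‖y‖ ^ 2 / 2 := by
      nlinarith [real_inner_le_norm y z, sq_nonneg (‖y‖ - ‖z‖)]
    have hcz : ⟪x, z⟫ - psiFun φ t z ≤ conj (psiFun φ t) x := conj_ge hK hLip ht.le x z
    have hinner : ⟪(1 - l) • y + l • x, z⟫ = (1 - l) * ⟪y, z⟫ + l * ⟪x, z⟫ := by
      rw [inner_add_left, real_inner_smul_left, real_inner_smul_left]
    have hpsi : psiFun φ s z = (1 - l) * (‖z‖ ^ 2 / 2) + l * psiFun φ t z :=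
      psi_decomp ht.ne' z
    rw [hinner, hpsi]
    have e1 := mul_le_mul_of_nonneg_left hqz (by linarith : (0:ℝ) ≤ 1 - l)
    have e2 := mul_le_mul_of_nonneg_left hcz hl0.le
    nlinarith [e1, e2]
  have step2 : ∀ x : EuclideanSpace ℝ (Fin d),
      (1 - l) * (‖y‖ ^ 2 / 2) + l * (⟪y, x⟫ - conj (psiFun φ t) x)
        ≤ conj (conj (psiFun φ s)) y := by
    intro x
    have h1 := biconj_ge hK hLip hs.le y ((1 - l) • y + l • x)
    have h2 := step1 x
    have hinner : ⟪y, (1 - l) • y + l • x⟫ = (1 - l) * ‖y‖ ^ 2 + l * ⟪y, x⟫ := by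
      rw [inner_add_right, real_inner_smul_right, real_inner_smul_right,
        real_inner_self_eq_norm_sq]
    rw [hinner] at h1
    nlinarith [h1, h2]
  have hsup : conj (conj (psiFun φ t)) y
      ≤ (conj (conj (psiFun φ s)) y - (1 - l) * (‖y‖ ^ 2 / 2)) / l := by
    show (⨆ x, ⟪y, x⟫ - conj (psiFun φ t) x) ≤ _
    apply ciSup_le
    intro x
    rw [le_div_iff₀ hl0]
    nlinarith [step2 x]
  have := (le_div_iff₀ hl0).1 hsup
  nlinarith [this]

lemma exists_max (hK : 0 ≤ K) (hLip : ∀ y z, |φ y - φ z| ≤ K * ‖y - z‖)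
    {t : ℝ} (ht : 0 < t) (x : EuclideanSpace ℝ (Fin d)) :
    ∃ z₀ : EuclideanSpace ℝ (Fin d), ∀ z,
      ⟪x, z⟫ - psiFun φ t z ≤ ⟪x, z₀⟫ - psiFun φ t z₀ := by
  have hφc : Continuous φ := by
    have : LipschitzWith (Real.toNNReal K) φ := by
      apply LipschitzWith.of_dist_le_mul
      intro a b
      rw [Real.dist_eq, dist_eq_norm, Real.coe_toNNReal K hK]
      exact hLip a b
    exact this.continuous
  have hf : Continuous fun z : EuclideanSpace ℝ (Fin d) => ⟪x, z⟫ - psiFun φ t z := by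
    apply Continuous.sub
    · exact continuous_const.inner continuous_id
    · unfold psiFun
      exact (((continuous_norm.pow 2).div_const 2).add (continuous_const.mul hφc))
  obtain ⟨fc, hfc⟩ : ∃ fc : ℝ, fc = ⟪x, (0 : EuclideanSpace ℝ (Fin d))⟫ - psiFun φ t 0 :=
    ⟨_, rfl⟩
  set R : ℝ := 2 * (‖x‖ + t * K) + 2 + 2 * |fc| + 2 * (t * |φ 0|) with hR
  have htK : 0 ≤ t * K := mul_nonneg ht.le hK
  have htφ : 0 ≤ t * |φ 0| := mul_nonneg ht.le (abs_nonneg _)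
  have hR2 : 2 ≤ R := by
    have := norm_nonneg x
    have := abs_nonneg fc
    linarith
  have hR0 : 0 ≤ R := by linarith
  have hout : ∀ z, R < ‖z‖ → ⟪x, z⟫ - psiFun φ t z < fc := by
    intro z hz
    have hb := term_bound2 hK hLip ht.le x z
    have h6 : 1 + |fc| + t * |φ 0| ≤ ‖z‖ / 2 - (‖x‖ + t * K) := by
      rw [hR] at hz; linarith
    have h6' : (0:ℝ) ≤ 1 + |fc| + t * |φ 0| := by
      have := abs_nonneg fc; linarith
    have h7 : (1 + |fc| + t * |φ 0|) * 2 ≤ (‖z‖ / 2 - (‖x‖ + t * K)) * ‖z‖ :=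
      mul_le_mul h6 (by linarith) (by norm_num) (h6'.trans h6)
    nlinarith [h7, hb, neg_abs_le fc, abs_nonneg fc]
  obtain ⟨z₀, hz₀mem, hz₀⟩ :=
    (isCompact_closedBall (0 : EuclideanSpace ℝ (Fin d)) R).exists_isMaxOn
      ⟨0, by simp [hR0]⟩ hf.continuousOn
  have h0mem : (0 : EuclideanSpace ℝ (Fin d)) ∈
      Metric.closedBall (0 : EuclideanSpace ℝ (Fin d)) R := by
    simp [hR0]
  have hfc0 : fc ≤ ⟪x, z₀⟫ - psiFun φ t z₀ := by
    rw [hfc]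
    exact hz₀ h0mem
  refine ⟨z₀, fun z => ?_⟩
  by_cases hzb : z ∈ Metric.closedBall (0 : EuclideanSpace ℝ (Fin d)) R
  · exact hz₀ hzb
  · have hzR : R < ‖z‖ := by
      simpa [Metric.mem_closedBall, dist_zero_right, not_le] using hzb
    exact ((hout z hzR).le.trans hfc0)

lemma sigma_sub_theta (hK : 0 ≤ K) (hLip : ∀ y z, |φ y - φ z| ≤ K * ‖y - z‖)
    {t : ℝ} (ht : 0 < t) : sigmaSet φ t ⊆ thetaSet φ t := by
  intro y hy
  obtain ⟨x, hsub, hstrict⟩ := hy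
  have h1 : conj (psiFun φ t) x ≤ ⟪x, y⟫ - conj (conj (psiFun φ t)) y := by
    show (⨆ z, ⟪x, z⟫ - psiFun φ t z) ≤ _
    apply ciSup_le
    intro z
    have hz := biconj_le hK hLip ht.le z
    have hsz := hsub z
    have hir : ⟪x, z - y⟫ = ⟪x, z⟫ - ⟪x, y⟫ := inner_sub_right x z y
    rw [hir] at hsz
    linarith
  have h2 : ⟪x, y⟫ - conj (psiFun φ t) x ≤ conj (conj (psiFun φ t)) y := by
    have := biconj_ge hK hLip ht.le y x
    rw [real_inner_comm] at this
    exact this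
  obtain ⟨z₀, hmax⟩ := exists_max hK hLip ht x
  have hconj : conj (psiFun φ t) x = ⟪x, z₀⟫ - psiFun φ t z₀ := by
    apply le_antisymm
    · show (⨆ z, ⟪x, z⟫ - psiFun φ t z) ≤ _
      exact ciSup_le hmax
    · exact conj_ge hK hLip ht.le x z₀
  by_cases hzy : z₀ = y
  · have hconj' : conj (psiFun φ t) x = ⟪x, y⟫ - psiFun φ t y := by
      rw [← hzy]; exact hconj
    show conj (conj (psiFun φ t)) y = psiFun φ t y
    linarith
  · exfalso
    have hs := hstrict z₀ hzy
    have hz₀ := biconj_le hK hLip ht.le z₀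
    linarith

end Helpers

theorem stmt14 (d : ℕ) (hd : 1 ≤ d) (K : ℝ) (hK : 0 ≤ K)
    (φ : EuclideanSpace ℝ (Fin d) → ℝ)
    (hLip : ∀ y z, |φ y - φ z| ≤ K * ‖y - z‖) :
    (∀ t : ℝ, 0 < t → sigmaSet φ t ⊆ thetaSet φ t) ∧
    (∀ s t : ℝ, 0 < s → s ≤ t → thetaSet φ t ⊆ thetaSet φ s) ∧
    (∀ s t : ℝ, 0 < s → s ≤ t → sigmaSet φ t ⊆ sigmaSet φ s) := by
  refine ⟨fun t ht => sigma_sub_theta hK hLip ht, ?_, ?_⟩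
  · -- Θ_t ⊆ Θ_s
    intro s t hs hst y hy
    have ht : 0 < t := hs.trans_le hst
    have hy' : conj (conj (psiFun φ t)) y = psiFun φ t y := hy
    have hk := key_ineq hK hLip hs hst y
    have hle := biconj_le hK hLip hs.le y
    have hdec := psi_decomp (φ := φ) (s := s) ht.ne' y
    show conj (conj (psiFun φ s)) y = psiFun φ s y
    rw [hy'] at hk
    linarith
  · -- Σ_t ⊆ Σ_s
    intro s t hs hst y hy
    have ht : 0 < t := hs.trans_le hst
    have hΘ : conj (conj (psiFun φ t)) y = psiFun φ t y :=
      sigma_sub_theta hK hLip ht hy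
    obtain ⟨x, hsub, hstrict⟩ := hy
    have hl0 : 0 < s / t := div_pos hs ht
    have hl1 : s / t ≤ 1 := (div_le_one ht).2 hst
    have hdec := psi_decomp (φ := φ) (s := s) ht.ne' y
    have hbs_le : conj (conj (psiFun φ s)) y ≤ psiFun φ s y := biconj_le hK hLip hs.le y
    have hupper : conj (conj (psiFun φ s)) y
        ≤ (1 - s / t) * (‖y‖ ^ 2 / 2) + (s / t) * conj (conj (psiFun φ t)) y := by
      rw [hΘ]; rw [hdec] at hbs_le; exact hbs_le
    refine ⟨(1 - s / t) • y + (s / t) • x, ?_, ?_⟩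
    · intro z
      have hk := key_ineq hK hLip hs hst z
      have hq : ‖z‖ ^ 2 = ‖y‖ ^ 2 + 2 * ⟪y, z - y⟫ + ‖z - y‖ ^ 2 := by
        have h := norm_add_sq_real y (z - y)
        simpa using h
      have hsz := hsub z
      have hinner : ⟪(1 - s / t) • y + (s / t) • x, z - y⟫
          = (1 - s / t) * ⟪y, z - y⟫ + (s / t) * ⟪x, z - y⟫ := by
        rw [inner_add_left, real_inner_smul_left, real_inner_smul_left]
      rw [ge_iff_le, hinner]
      have e1 : (1 - s / t) * ⟪y, z - y⟫
          ≤ (1 - s / t) * (‖z‖ ^ 2 / 2 - ‖y‖ ^ 2 / 2) := by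
        apply mul_le_mul_of_nonneg_left _ (by linarith : (0:ℝ) ≤ 1 - s / t)
        linarith [sq_nonneg ‖z - y‖]
      have e2 : (s / t) * ⟪x, z - y⟫
          ≤ (s / t) * (conj (conj (psiFun φ t)) z - conj (conj (psiFun φ t)) y) := by
        apply mul_le_mul_of_nonneg_left _ hl0.le
        linarith
      nlinarith [hk, hupper, e1, e2]
    · intro z hzy
      have hk := key_ineq hK hLip hs hst z
      have hq : ‖z‖ ^ 2 = ‖y‖ ^ 2 + 2 * ⟪y, z - y⟫ + ‖z - y‖ ^ 2 := by
        have h := norm_add_sq_real y (z - y)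
        simpa using h
      have hstr := hstrict z hzy
      have hinner : ⟪(1 - s / t) • y + (s / t) • x, z⟫ - ⟪(1 - s / t) • y + (s / t) • x, y⟫
          = (1 - s / t) * ⟪y, z - y⟫ + (s / t) * ⟪x, z - y⟫ := by
        rw [← inner_sub_right, inner_add_left, real_inner_smul_left, real_inner_smul_left]
      have hxzy : ⟪x, z - y⟫ = ⟪x, z⟫ - ⟪x, y⟫ := inner_sub_right x z y
      have e1 : (1 - s / t) * ⟪y, z - y⟫
          ≤ (1 - s / t) * (‖z‖ ^ 2 / 2 - ‖y‖ ^ 2 / 2) := by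
        apply mul_le_mul_of_nonneg_left _ (by linarith : (0:ℝ) ≤ 1 - s / t)
        linarith [sq_nonneg ‖z - y‖]
      have e2 : (s / t) * ⟪x, z - y⟫
          < (s / t) * (conj (conj (psiFun φ t)) z - conj (conj (psiFun φ t)) y) := by
        apply mul_lt_mul_of_pos_left _ hl0
        rw [hxzy]
        linarith
      nlinarith [hk, hupper, e1, e2, hinner]
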